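/- For every integer n ≥ 1 and every real α, the (2n+2)-point combined binary subdivision scheme reproduces polynomials of degree at most 1: for every real polynomial p with deg p ≤ 1 and every real x, Σ_{j=0}^{2n} v_j · p(x + j − n) = p(x) and Σ_{j=0}^{2n+1} e_j · p(x + j − n) = p(x + 1/2). -/

import Mathlib

open Finset

/-- The Deslauriers–Dubuc coefficients of the `(2n+2)`-point interpolatory scheme. -/
noncomputable def ddCoef (n j : ℕ) : ℝ :=
  (1 / 2 ^ (4 * n + 1)) *
    ((-1 : ℝ) ^ ((j : ℤ) - n - 1) * (n + 1) / ((2 * (j : ℤ) - 2 * n - 1 : ℤ) : ℝ)) *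
    (Nat.choose (2 * n + 1) n : ℝ) * (Nat.choose (2 * n + 1) j : ℝ)

/-- The vertex-rule coefficients of the `(2n+2)`-point combined binary subdivision scheme. -/
noncomputable def vCoef (n : ℕ) (α : ℝ) (j : ℕ) : ℝ :=
  if j = n then
    1 + α - α / 2 ^ (4 * n + 1) * (Nat.choose (4 * n + 2) (2 * n + 1) : ℝ)
  else
    -(α / 2 ^ (4 * n + 1)) * (Nat.choose (4 * n + 2) (2 * j + 1) : ℝ)

/-- The edge-rule coefficients of the `(2n+2)`-point combined binary subdivision scheme. -/
noncomputable def eCoef (n : ℕ) (α : ℝ) (j : ℕ) : ℝ :=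
  (1 + α) * ddCoef n j - α / 2 ^ (4 * n + 1) * (Nat.choose (4 * n + 2) (2 * j) : ℝ)

/-! ### Auxiliary lemmas -/

lemma pf_sum (m : ℕ) (x : ℝ) (hx : ∀ j ∈ range (m+1), x + j ≠ 0) :
    ∑ j ∈ range (m+1), (-1:ℝ)^j * (Nat.choose m j) / (x + j)
      = (Nat.factorial m) / ∏ j ∈ range (m+1), (x + j) := by
  induction m generalizing x with
  | zero => simp
  | succ m ih =>
    have hx0 : x ≠ 0 := by simpa using hx 0 (by simp)
    have hxs : ∀ j ∈ range (m+1), x + j ≠ 0 := fun j hj => hx j (by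
      simp at hj ⊢; omega)
    have hxs1 : ∀ j ∈ range (m+1), (x+1) + j ≠ 0 := by
      intro j hj h
      have h2 := hx (j+1) (by simp at hj ⊢; omega)
      apply h2; push_cast; linarith
    have hS := ih x hxs
    have hS1 := ih (x+1) hxs1
    have hT : ∑ j ∈ range (m+1), (-1:ℝ)^j * (Nat.choose m (j+1)) / (x + (j+1))
        = 1/x - ∑ j ∈ range (m+1), (-1:ℝ)^j * (Nat.choose m j) / (x + j) := by
      have h2 : ∑ j ∈ range (m+2), (-1:ℝ)^j * (Nat.choose m j) / (x + j)
          = ∑ j ∈ range (m+1), (-1:ℝ)^j * (Nat.choose m j) / (x + j) := by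
        rw [Finset.sum_range_succ]
        simp [Nat.choose_succ_self]
      rw [Finset.sum_range_succ'] at h2
      have h3 : ∀ j ∈ range (m+1), (-1:ℝ)^(j+1) * (Nat.choose m (j+1)) / (x + ((j:ℕ)+1:ℕ))
          = -((-1:ℝ)^j * (Nat.choose m (j+1)) / (x + ((j:ℝ)+1))) := by
        intro j hj; push_cast; ring
      rw [Finset.sum_congr rfl h3, Finset.sum_neg_distrib] at h2
      simp only [pow_zero, Nat.choose_zero_right, Nat.cast_one, Nat.cast_zero, add_zero,
        one_mul] at h2
      push_cast
      linarith
    have hmain : ∑ j ∈ range (m+2), (-1:ℝ)^j * (Nat.choose (m+1) j) / (x + j)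
        = ∑ j ∈ range (m+1), (-1:ℝ)^j * (Nat.choose m j) / (x + j)
          - ∑ j ∈ range (m+1), (-1:ℝ)^j * (Nat.choose m j) / ((x+1) + j) := by
      rw [Finset.sum_range_succ']
      have h4 : ∀ j ∈ range (m+1), (-1:ℝ)^(j+1) * (Nat.choose (m+1) (j+1)) / (x + ((j:ℕ)+1:ℕ))
          = -((-1:ℝ)^j * (Nat.choose m j) / ((x+1) + j))
            + -((-1:ℝ)^j * (Nat.choose m (j+1)) / (x + ((j:ℝ)+1))) := by
        intro j hj
        simp only [Nat.choose_succ_succ, Nat.succ_eq_add_one, pow_succ]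
        push_cast
        rw [show x + ((j:ℝ)+1) = (x+1) + j by ring]
        ring
      rw [Finset.sum_congr rfl h4, Finset.sum_add_distrib, Finset.sum_neg_distrib,
        Finset.sum_neg_distrib]
      simp only [pow_zero, Nat.choose_zero_right, Nat.cast_one, Nat.cast_zero, add_zero, one_mul]
      push_cast
      linarith [hT]
    rw [hmain, hS, hS1]
    have hxm : x + ((m:ℝ)+1) ≠ 0 := by
      intro hc
      apply hx (m+1) (by simp)
      push_cast
      linarith
    have hP : ∏ j ∈ range (m+2), (x + (j:ℝ)) = (∏ j ∈ range (m+1), (x + (j:ℝ))) * (x + ((m:ℝ)+1)) := by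
      rw [Finset.prod_range_succ]; push_cast; ring_nf
    have hQ : ∏ j ∈ range (m+2), (x + (j:ℝ)) = x * ∏ j ∈ range (m+1), ((x+1) + (j:ℝ)) := by
      rw [Finset.prod_range_succ']
      simp only [add_zero, Nat.cast_zero]
      rw [mul_comm]
      congr 1
      apply Finset.prod_congr rfl
      intro j hj; push_cast; ring
    have hPne : (∏ j ∈ range (m+1), (x + (j:ℝ))) ≠ 0 := Finset.prod_ne_zero_iff.2 hxs
    have hQne : (∏ j ∈ range (m+1), ((x+1) + (j:ℝ))) ≠ 0 := Finset.prod_ne_zero_iff.2 hxs1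
    have hR : (∏ j ∈ range (m+1), (x + (j:ℝ))) * (x + ((m:ℝ)+1))
        = x * ∏ j ∈ range (m+1), ((x+1) + (j:ℝ)) := by rw [← hP, hQ]
    rw [hP, Nat.factorial_succ]
    push_cast
    rw [div_sub_div _ _ hPne hQne,
      div_eq_div_iff (mul_ne_zero hPne hQne) (mul_ne_zero hPne hxm)]
    linear_combination (-((∏ j ∈ range (m+1), (x + (j:ℝ))) * ((Nat.factorial m : ℝ)))) * hR

lemma prod_half (n : ℕ) :
    ∏ j ∈ range (2*n+2), ((j:ℝ) - n - 1/2)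
      = (-1:ℝ)^(n+1) * ((2*n+1).factorial)^2 / ((n.factorial)^2 * 2^(4*n+2)) := by
  induction n with
  | zero => norm_num
  | succ n ih =>
    have hstep : ∏ j ∈ range (2*(n+1)+2), ((j:ℝ) - (n+1) - 1/2)
        = (∏ j ∈ range (2*n+2), ((j:ℝ) - n - 1/2)) * (-((2*(n:ℝ)+3)/2)^2) := by
      have h1 : (2*(n+1)+2) = (2*n+3) + 1 := by ring
      rw [h1, Finset.prod_range_succ']
      have h2 : ∀ j ∈ range (2*n+3), (((j+1:ℕ):ℝ) - (n+1) - 1/2) = ((j:ℝ) - n - 1/2) := by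
        intro j hj; push_cast; ring
      rw [Finset.prod_congr rfl h2, Finset.prod_range_succ]
      push_cast; ring
    push_cast
    rw [hstep, ih]
    have e1 : (2*(n+1)+1).factorial = (2*n+3)*((2*n+2)*(2*n+1).factorial) := by
      have : 2*(n+1)+1 = (2*n+2)+1 := by ring
      rw [this, Nat.factorial_succ, Nat.factorial_succ]
    have e2 : (n+1).factorial = (n+1)*n.factorial := Nat.factorial_succ n
    rw [e1, e2]
    have hnf : (n.factorial : ℝ) ≠ 0 := Nat.cast_ne_zero.2 (Nat.factorial_ne_zero n)
    have h2 : (2:ℝ)^(4*n+2) ≠ 0 := by positivity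
    have hpow : (4*(n+1)+2) = (4*n+2) + 4 := by ring
    rw [hpow]
    push_cast
    rw [pow_succ ((-1:ℝ)) (n+1), pow_add]
    field_simp
    ring

lemma hsign (n j : ℕ) : (-1:ℝ)^((j:ℤ) - n - 1) = (-1:ℝ)^j * (-1:ℝ)^(n+1) := by
  have h : (j:ℤ) - n - 1 = (j:ℤ) - ((n+1:ℕ):ℤ) := by push_cast; ring
  rw [h, zpow_sub₀ (by norm_num : (-1:ℝ) ≠ 0), zpow_natCast, zpow_natCast, div_eq_mul_inv]
  congr 1
  rw [← inv_pow]
  norm_num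

lemma dd_sum (n : ℕ) : ∑ j ∈ Finset.range (2*n+2), ddCoef n j = 1 := by
  have hx : ∀ j ∈ range (2*n+2), (-(n:ℝ) - 1/2) + j ≠ 0 := by
    intro j hj h
    have h1 : (2*j : ℝ) = 2*n+1 := by linarith
    have h2 : (2*j : ℕ) = 2*n+1 := by exact_mod_cast h1
    omega
  have hpf := pf_sum (2*n+1) (-(n:ℝ) - 1/2) hx
  have hterm : ∀ j ∈ range (2*n+2), ddCoef n j
      = ((-1:ℝ)^(n+1) * ((n:ℝ)+1) * (Nat.choose (2*n+1) n : ℝ) / 2^(4*n+2)) *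
        ((-1:ℝ)^j * (Nat.choose (2*n+1) j : ℝ) / ((-(n:ℝ)-1/2) + j)) := by
    intro j hj
    unfold ddCoef
    rw [hsign n j]
    have hd : ((2*(j:ℤ) - 2*n - 1 : ℤ) : ℝ) = 2 * ((-(n:ℝ)-1/2) + j) := by push_cast; ring
    rw [hd]
    simp only [div_eq_mul_inv, mul_inv]
    ring
  rw [Finset.sum_congr rfl hterm, ← Finset.mul_sum, hpf]
  have hprod : ∏ j ∈ range (2*n+2), ((-(n:ℝ)-1/2) + j)
      = (-1:ℝ)^(n+1) * ((2*n+1).factorial)^2 / ((n.factorial)^2 * 2^(4*n+2)) := by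
    rw [← prod_half n]
    apply Finset.prod_congr rfl
    intro j hj; ring
  rw [hprod]
  have hrel : (Nat.choose (2*n+1) n : ℝ) * n.factorial * ((n+1).factorial) = (2*n+1).factorial := by
    have h := Nat.choose_mul_factorial_mul_factorial (show n ≤ 2*n+1 by omega)
    have h2 : 2*n+1-n = n+1 := by omega
    rw [h2] at h
    exact_mod_cast h
  have e2 : ((n+1).factorial : ℝ) = ((n:ℝ)+1) * n.factorial := by
    rw [Nat.factorial_succ]; push_cast; ring
  rw [e2] at hrel
  have hs : (-1:ℝ)^(n+1) * (-1:ℝ)^(n+1) = 1 := by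
    rw [← pow_add]
    exact Even.neg_one_pow ⟨n+1, by ring⟩
  have hs0 : (-1:ℝ)^(n+1) ≠ 0 := by
    intro h; rw [h] at hs; norm_num at hs
  have hfn : (n.factorial : ℝ) ≠ 0 := Nat.cast_ne_zero.2 (Nat.factorial_ne_zero n)
  have hf2n : ((2*n+1).factorial : ℝ) ≠ 0 := Nat.cast_ne_zero.2 (Nat.factorial_ne_zero _)
  have h2 : (2:ℝ)^(4*n+2) ≠ 0 := by positivity
  field_simp
  linear_combination hrel

lemma dd_symm (n j : ℕ) (h : j ≤ 2*n+1) : ddCoef n (2*n+1-j) = ddCoef n j := by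
  unfold ddCoef
  rw [Nat.choose_symm h]
  have hc : ((2*n+1-j:ℕ):ℤ) = 2*(n:ℤ)+1-(j:ℤ) := by omega
  rw [hc]
  have hd : (2*(2*(n:ℤ)+1-(j:ℤ)) - 2*(n:ℤ) - 1) = -(2*(j:ℤ) - 2*(n:ℤ) - 1) := by ring
  rw [hd, Int.cast_neg]
  have hsg : (-1:ℝ)^(2*(n:ℤ)+1-(j:ℤ)-(n:ℤ)-1) = -(-1:ℝ)^((j:ℤ)-(n:ℤ)-1) := by
    have he : (2*(n:ℤ)+1-(j:ℤ)-(n:ℤ)-1) = ((j:ℤ)-(n:ℤ)-1) + (2*((n:ℤ)-(j:ℤ)) + 1) := by ring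
    have hodd : (-1:ℝ)^(2*((n:ℤ)-(j:ℤ)) + 1) = -1 := by
      rw [zpow_add₀ (by norm_num : (-1:ℝ) ≠ 0), zpow_mul]
      norm_num
    rw [he, zpow_add₀ (by norm_num : (-1:ℝ) ≠ 0), hodd]
    ring
  rw [hsg]
  ring

lemma dd_lin (n : ℕ) : ∑ j ∈ range (2*n+2), ddCoef n j * ((j:ℝ) - n) = 1/2 := by
  have h0 : ∑ j ∈ range (2*n+2), ddCoef n j * ((j:ℝ) - n - 1/2) = 0 := by
    have hr := Finset.sum_range_reflect (fun j => ddCoef n j * ((j:ℝ) - n - 1/2)) (2*n+2)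
    have hc : ∀ j ∈ range (2*n+2),
        ddCoef n (2*n+2-1-j) * (((2*n+2-1-j:ℕ):ℝ) - n - 1/2)
          = -(ddCoef n j * ((j:ℝ) - n - 1/2)) := by
      intro j hj
      simp only [Finset.mem_range] at hj
      have hle : j ≤ 2*n+1 := by omega
      have h1 : 2*n+2-1-j = 2*n+1-j := by omega
      rw [h1, dd_symm n j hle]
      have h2 : ((2*n+1-j:ℕ):ℝ) = 2*(n:ℝ)+1-j := by
        push_cast [hle]; ring
      rw [h2]
      ring
    rw [Finset.sum_congr rfl hc, Finset.sum_neg_distrib] at hr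
    linarith
  have h1 : ∀ j ∈ range (2*n+2), ddCoef n j * ((j:ℝ) - n)
      = ddCoef n j * ((j:ℝ) - n - 1/2) + (1/2) * ddCoef n j := by
    intro j hj; ring
  rw [Finset.sum_congr rfl h1, Finset.sum_add_distrib, h0, ← Finset.mul_sum, dd_sum]
  norm_num

lemma sum_range_two_mul (m : ℕ) (f : ℕ → ℝ) :
    ∑ i ∈ range (2*m), f i = ∑ j ∈ range m, (f (2*j) + f (2*j+1)) := by
  induction m with
  | zero => simp
  | succ m ih =>
    have h : 2*(m+1) = (2*m) + 1 + 1 := by ring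
    rw [h, Finset.sum_range_succ, Finset.sum_range_succ, ih, Finset.sum_range_succ]
    ring

lemma choose_even_sum (n : ℕ) :
    ∑ j ∈ range (2*n+2), ((4*n+2).choose (2*j) : ℝ) = 2^(4*n+1) := by
  have hA : ∑ i ∈ range (4*n+4), ((4*n+2).choose i : ℝ) = 2^(4*n+2) := by
    have h1 : (4*n+2).choose (4*n+3) = 0 := Nat.choose_eq_zero_of_lt (by omega)
    rw [show 4*n+4 = (4*n+3)+1 by ring, Finset.sum_range_succ, h1]
    have h2 : ∑ i ∈ range (4*n+3), (4*n+2).choose i = 2^(4*n+2) := by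
      rw [show 4*n+3 = 4*n+2+1 from rfl]
      exact Nat.sum_range_choose (4*n+2)
    have h3 : ((∑ i ∈ range (4*n+3), (4*n+2).choose i : ℕ) : ℝ) = ((2^(4*n+2) : ℕ) : ℝ) := by
      exact_mod_cast h2
    push_cast at h3
    rw [h3]
    ring
  have hB : ∑ i ∈ range (4*n+4), (-1:ℝ)^i * ((4*n+2).choose i : ℝ) = 0 := by
    have h1 : (4*n+2).choose (4*n+3) = 0 := Nat.choose_eq_zero_of_lt (by omega)
    rw [show 4*n+4 = (4*n+3)+1 by ring, Finset.sum_range_succ, h1]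
    have h2 := Int.alternating_sum_range_choose (n := 4*n+2)
    rw [if_neg (by omega)] at h2
    have h3 : ((∑ i ∈ range (4*n+3), (-1:ℤ)^i * ((4*n+2).choose i : ℤ) : ℤ) : ℝ) = 0 := by
      rw [h2]; norm_num
    push_cast at h3
    simpa using h3
  have hE := sum_range_two_mul (2*n+2) (fun i => ((4*n+2).choose i : ℝ))
  have hO := sum_range_two_mul (2*n+2) (fun i => (-1:ℝ)^i * ((4*n+2).choose i : ℝ))
  rw [show 2*(2*n+2) = 4*n+4 by ring] at hE hO
  rw [hA] at hE
  rw [hB] at hO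
  have hsgn : ∀ j ∈ range (2*n+2),
      ((-1:ℝ)^(2*j) * ((4*n+2).choose (2*j) : ℝ) + (-1:ℝ)^(2*j+1) * ((4*n+2).choose (2*j+1) : ℝ))
        = ((4*n+2).choose (2*j) : ℝ) - ((4*n+2).choose (2*j+1) : ℝ) := by
    intro j hj
    rw [Even.neg_one_pow ⟨j, by ring⟩, Odd.neg_one_pow ⟨j, rfl⟩]
    ring
  rw [Finset.sum_congr rfl hsgn, Finset.sum_sub_distrib] at hO
  rw [Finset.sum_add_distrib] at hE
  have hp : (2:ℝ)^(4*n+2) = 2 * 2^(4*n+1) := by rw [pow_succ]; ring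
  linarith [hE, hO, hp]

lemma choose_odd_sum (n : ℕ) :
    ∑ j ∈ range (2*n+1), ((4*n+2).choose (2*j+1) : ℝ) = 2^(4*n+1) := by
  -- from the even/odd decomposition as in choose_even_sum
  have hA : ∑ i ∈ range (4*n+4), ((4*n+2).choose i : ℝ) = 2^(4*n+2) := by
    have h1 : (4*n+2).choose (4*n+3) = 0 := Nat.choose_eq_zero_of_lt (by omega)
    rw [show 4*n+4 = (4*n+3)+1 by ring, Finset.sum_range_succ, h1]
    have h2 : ∑ i ∈ range (4*n+3), (4*n+2).choose i = 2^(4*n+2) := by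
      rw [show 4*n+3 = 4*n+2+1 from rfl]
      exact Nat.sum_range_choose (4*n+2)
    have h3 : ((∑ i ∈ range (4*n+3), (4*n+2).choose i : ℕ) : ℝ) = ((2^(4*n+2) : ℕ) : ℝ) := by
      exact_mod_cast h2
    push_cast at h3
    rw [h3]
    ring
  have hB : ∑ i ∈ range (4*n+4), (-1:ℝ)^i * ((4*n+2).choose i : ℝ) = 0 := by
    have h1 : (4*n+2).choose (4*n+3) = 0 := Nat.choose_eq_zero_of_lt (by omega)
    rw [show 4*n+4 = (4*n+3)+1 by ring, Finset.sum_range_succ, h1]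
    have h2 := Int.alternating_sum_range_choose (n := 4*n+2)
    rw [if_neg (by omega)] at h2
    have h3 : ((∑ i ∈ range (4*n+3), (-1:ℤ)^i * ((4*n+2).choose i : ℤ) : ℤ) : ℝ) = 0 := by
      rw [h2]; norm_num
    push_cast at h3
    simpa using h3
  have hE := sum_range_two_mul (2*n+2) (fun i => ((4*n+2).choose i : ℝ))
  have hO := sum_range_two_mul (2*n+2) (fun i => (-1:ℝ)^i * ((4*n+2).choose i : ℝ))
  rw [show 2*(2*n+2) = 4*n+4 by ring] at hE hO
  rw [hA] at hE
  rw [hB] at hO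
  have hsgn : ∀ j ∈ range (2*n+2),
      ((-1:ℝ)^(2*j) * ((4*n+2).choose (2*j) : ℝ) + (-1:ℝ)^(2*j+1) * ((4*n+2).choose (2*j+1) : ℝ))
        = ((4*n+2).choose (2*j) : ℝ) - ((4*n+2).choose (2*j+1) : ℝ) := by
    intro j hj
    rw [Even.neg_one_pow ⟨j, by ring⟩, Odd.neg_one_pow ⟨j, rfl⟩]
    ring
  rw [Finset.sum_congr rfl hsgn, Finset.sum_sub_distrib] at hO
  rw [Finset.sum_add_distrib] at hE
  have hp : (2:ℝ)^(4*n+2) = 2 * 2^(4*n+1) := by rw [pow_succ]; ring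
  have hfull : ∑ j ∈ range (2*n+2), ((4*n+2).choose (2*j+1) : ℝ) = 2^(4*n+1) := by
    linarith [hE, hO, hp]
  have hlast : ((4*n+2).choose (2*(2*n+1)+1) : ℝ) = 0 := by
    rw [Nat.choose_eq_zero_of_lt (by omega)]; norm_num
  rw [show 2*n+2 = (2*n+1)+1 by ring, Finset.sum_range_succ, hlast] at hfull
  linarith [hfull]

lemma odd_lin (n : ℕ) :
    ∑ j ∈ range (2*n+1), ((4*n+2).choose (2*j+1) : ℝ) * ((j:ℝ) - n) = 0 := by
  have hr := Finset.sum_range_reflect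
    (fun j => ((4*n+2).choose (2*j+1) : ℝ) * ((j:ℝ) - n)) (2*n+1)
  have hc : ∀ j ∈ range (2*n+1),
      ((4*n+2).choose (2*(2*n+1-1-j)+1) : ℝ) * (((2*n+1-1-j:ℕ):ℝ) - n)
        = -(((4*n+2).choose (2*j+1) : ℝ) * ((j:ℝ) - n)) := by
    intro j hj
    simp only [Finset.mem_range] at hj
    have hle : j ≤ 2*n := by omega
    have h1 : 2*n+1-1-j = 2*n-j := by omega
    have h2 : 2*(2*n-j)+1 = 4*n+2 - (2*j+1) := by omega
    rw [h1, h2, Nat.choose_symm (by omega)]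
    have h3 : ((2*n-j:ℕ):ℝ) = 2*(n:ℝ)-j := by push_cast [hle]; ring
    rw [h3]
    ring
  rw [Finset.sum_congr rfl hc, Finset.sum_neg_distrib] at hr
  linarith

lemma even_lin (n : ℕ) :
    ∑ j ∈ range (2*n+2), ((4*n+2).choose (2*j) : ℝ) * ((j:ℝ) - n - 1/2) = 0 := by
  have hr := Finset.sum_range_reflect
    (fun j => ((4*n+2).choose (2*j) : ℝ) * ((j:ℝ) - n - 1/2)) (2*n+2)
  have hc : ∀ j ∈ range (2*n+2),
      ((4*n+2).choose (2*(2*n+2-1-j)) : ℝ) * (((2*n+2-1-j:ℕ):ℝ) - n - 1/2)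
        = -(((4*n+2).choose (2*j) : ℝ) * ((j:ℝ) - n - 1/2)) := by
    intro j hj
    simp only [Finset.mem_range] at hj
    have hle : j ≤ 2*n+1 := by omega
    have h1 : 2*n+2-1-j = 2*n+1-j := by omega
    have h2 : 2*(2*n+1-j) = 4*n+2 - (2*j) := by omega
    rw [h1, h2, Nat.choose_symm (by omega)]
    have h3 : ((2*n+1-j:ℕ):ℝ) = 2*(n:ℝ)+1-j := by push_cast [hle]; ring
    rw [h3]
    ring
  rw [Finset.sum_congr rfl hc, Finset.sum_neg_distrib] at hr
  linarith

lemma even_lin' (n : ℕ) :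
    ∑ j ∈ range (2*n+2), ((4*n+2).choose (2*j) : ℝ) * ((j:ℝ) - n) = 2^(4*n) := by
  have h1 : ∀ j ∈ range (2*n+2), ((4*n+2).choose (2*j) : ℝ) * ((j:ℝ) - n)
      = ((4*n+2).choose (2*j) : ℝ) * ((j:ℝ) - n - 1/2)
        + (1/2) * ((4*n+2).choose (2*j) : ℝ) := by
    intro j hj; ring
  rw [Finset.sum_congr rfl h1, Finset.sum_add_distrib, even_lin, ← Finset.mul_sum,
    choose_even_sum]
  rw [show (4*n+1) = (4*n)+1 by ring, pow_succ]
  ring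

lemma vCoef_eq (n : ℕ) (α : ℝ) (j : ℕ) :
    vCoef n α j = (if j = n then (1+α) else 0)
      - α / 2^(4*n+1) * ((4*n+2).choose (2*j+1) : ℝ) := by
  unfold vCoef
  split_ifs with h
  · subst h; ring
  · ring

/-- The (2n+2)-point combined scheme reproduces polynomials of degree at most 1. -/
theorem combined_scheme_linear_reproduction (n : ℕ) (hn : 1 ≤ n) (α : ℝ)
    (p : Polynomial ℝ) (hp : p.degree ≤ 1) (x : ℝ) :
    (∑ j ∈ Finset.range (2 * n + 1), vCoef n α j * p.eval (x + j - n) = p.eval x) ∧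
    (∑ j ∈ Finset.range (2 * n + 2), eCoef n α j * p.eval (x + j - n)
      = p.eval (x + 1 / 2)) := by
  have hdeg : p.natDegree < 2 :=
    Nat.lt_succ_of_le (Polynomial.natDegree_le_iff_degree_le.2 (by exact_mod_cast hp))
  have heval : ∀ t : ℝ, p.eval t = p.coeff 0 + p.coeff 1 * t := by
    intro t
    rw [Polynomial.eval_eq_sum_range' hdeg]
    rw [Finset.sum_range_succ, Finset.sum_range_succ]
    simp
  set c0 := p.coeff 0
  set c1 := p.coeff 1
  have h2pow : (2:ℝ)^(4*n+1) ≠ 0 := by positivity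
  -- vertex sums
  have hv1 : ∑ j ∈ range (2*n+1), vCoef n α j = 1 := by
    have h := fun j (_ : j ∈ range (2*n+1)) => vCoef_eq n α j
    rw [Finset.sum_congr rfl h, Finset.sum_sub_distrib]
    rw [Finset.sum_ite_eq' (range (2*n+1)) n (fun _ => 1+α)]
    rw [if_pos (Finset.mem_range.2 (by omega)), ← Finset.mul_sum, choose_odd_sum]
    field_simp
    ring
  have hv2 : ∑ j ∈ range (2*n+1), vCoef n α j * ((j:ℝ) - n) = 0 := by
    have h : ∀ j ∈ range (2*n+1), vCoef n α j * ((j:ℝ) - n)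
        = (if j = n then (1+α) * ((j:ℝ)-n) else 0)
          - α / 2^(4*n+1) * (((4*n+2).choose (2*j+1) : ℝ) * ((j:ℝ)-n)) := by
      intro j hj
      rw [vCoef_eq]
      split_ifs with hh
      · subst hh; ring
      · ring
    rw [Finset.sum_congr rfl h, Finset.sum_sub_distrib]
    rw [Finset.sum_ite_eq' (range (2*n+1)) n (fun j => (1+α) * ((j:ℝ)-n))]
    rw [if_pos (Finset.mem_range.2 (by omega)), ← Finset.mul_sum, odd_lin]
    ring
  -- edge sums
  have he1 : ∑ j ∈ range (2*n+2), eCoef n α j = 1 := by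
    unfold eCoef
    rw [Finset.sum_sub_distrib, ← Finset.mul_sum, ← Finset.mul_sum, dd_sum, choose_even_sum]
    field_simp
    ring
  have he2 : ∑ j ∈ range (2*n+2), eCoef n α j * ((j:ℝ) - n) = 1/2 := by
    have h : ∀ j ∈ range (2*n+2), eCoef n α j * ((j:ℝ) - n)
        = (1+α) * (ddCoef n j * ((j:ℝ)-n))
          - α / 2^(4*n+1) * (((4*n+2).choose (2*j) : ℝ) * ((j:ℝ)-n)) := by
      intro j hj; unfold eCoef; ring
    rw [Finset.sum_congr rfl h, Finset.sum_sub_distrib, ← Finset.mul_sum, ← Finset.mul_sum,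
      dd_lin, even_lin']
    have : (2:ℝ)^(4*n+1) = 2^(4*n) * 2 := by rw [pow_succ]
    rw [this]
    have h4 : (2:ℝ)^(4*n) ≠ 0 := by positivity
    field_simp
    ring
  constructor
  · have h : ∀ j ∈ range (2*n+1), vCoef n α j * p.eval (x + j - n)
        = (c0 + c1*x) * vCoef n α j + c1 * (vCoef n α j * ((j:ℝ) - n)) := by
      intro j hj
      rw [heval (x + j - n)]
      ring
    rw [Finset.sum_congr rfl h, Finset.sum_add_distrib, ← Finset.mul_sum, ← Finset.mul_sum,
      hv1, hv2, heval x]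
    ring
  · have h : ∀ j ∈ range (2*n+2), eCoef n α j * p.eval (x + j - n)
        = (c0 + c1*x) * eCoef n α j + c1 * (eCoef n α j * ((j:ℝ) - n)) := by
      intro j hj
      rw [heval (x + j - n)]
      ring
    rw [Finset.sum_congr rfl h, Finset.sum_add_distrib, ← Finset.mul_sum, ← Finset.mul_sum,
      he1, he2, heval (x + 1/2)]
    ring
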